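/- arXiv:2312.03125 — 7 statements merged into one kernel-verified Lean document; each statement's English description precedes it below -/
import Mathlib

section
/- Let 𝔤 be a finite-dimensional real Lie algebra with a nice basis e_1,…,e_n and let D be a derivation of 𝔤. Then the linear map Δ defined by Δ(e_i) = e^i(D e_i)·e_i (the diagonal part of D in the nice basis) is again a derivation of 𝔤; consequently every derivation of 𝔤 splits as the sum of a diagonal derivation and a derivation whose matrix in the nice basis has zeroes on the diagonal. -/
section Aux

variable {n : ℕ} {L : Type*} [LieRing L] [LieAlgebra ℝ L]

lemma aux_lie_expand (e : Module.Basis (Fin n) ℝ L) (x y : L) :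
    (⁅x, y⁆ : L) = ∑ l : Fin n, e.repr y l • ⁅x, e l⁆ := by
  conv_lhs => rw [← e.sum_repr y]
  rw [show (⁅x, ∑ l : Fin n, e.repr y l • e l⁆ : L)
      = LieAlgebra.ad ℝ L x (∑ l : Fin n, e.repr y l • e l) from rfl, map_sum]
  simp [LieAlgebra.ad_apply]

lemma aux_coord_right (e : Module.Basis (Fin n) ℝ L)
    (h2 : ∀ i j l l' : Fin n, e.coord j ⁅e i, e l⁆ ≠ 0 → e.coord j ⁅e i, e l'⁆ ≠ 0 → l = l')
    (x : L) (i j k : Fin n) (hk : e.coord k ⁅e i, e j⁆ ≠ 0) :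
    e.coord k ⁅e i, x⁆ = e.coord j x * e.coord k ⁅e i, e j⁆ := by
  rw [aux_lie_expand e (e i) x, map_sum, Finset.sum_eq_single j]
  · simp [mul_comm]
  · intro l _ hl
    rcases eq_or_ne (e.coord k ⁅e i, e l⁆) 0 with h | h
    · simp [h]
    · exact absurd (h2 i k l j h hk) hl
  · simp

lemma aux_coord_left (e : Module.Basis (Fin n) ℝ L)
    (h2 : ∀ i j l l' : Fin n, e.coord j ⁅e i, e l⁆ ≠ 0 → e.coord j ⁅e i, e l'⁆ ≠ 0 → l = l')
    (x : L) (i j k : Fin n) (hk : e.coord k ⁅e i, e j⁆ ≠ 0) :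
    e.coord k ⁅x, e j⁆ = e.coord i x * e.coord k ⁅e i, e j⁆ := by
  have hk' : e.coord k ⁅e j, e i⁆ ≠ 0 := by
    rw [← lie_skew, map_neg]; simpa using hk
  have := aux_coord_right e h2 x j i k hk'
  rw [← lie_skew x (e j), map_neg, this, ← lie_skew (e i) (e j), map_neg]
  ring

end Aux

/-- A basis `e` of a real Lie algebra is *nice* if (i) every bracket `⁅e i, e j⁆` is a
scalar multiple of a single basis vector, and (ii) for all `i, j` there is at most one
index `l` with `e^j ⁅e i, e l⁆ ≠ 0`. -/
def IsNiceBasis {n : ℕ} {L : Type*} [LieRing L] [LieAlgebra ℝ L]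
    (e : Module.Basis (Fin n) ℝ L) : Prop :=
  (∀ i j : Fin n, ∃ (k : Fin n) (c : ℝ), ⁅e i, e j⁆ = c • e k) ∧
  (∀ i j l l' : Fin n, e.coord j ⁅e i, e l⁆ ≠ 0 → e.coord j ⁅e i, e l'⁆ ≠ 0 → l = l')

section Aux2
variable {n : ℕ} {L : Type*} [LieRing L] [LieAlgebra ℝ L]

lemma aux_basis_case (e : Module.Basis (Fin n) ℝ L) (he : IsNiceBasis e)
    (D : Module.End ℝ L) (hD : ∀ x y : L, D ⁅x, y⁆ = ⁅D x, y⁆ + ⁅x, D y⁆) (i j : Fin n) :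
    (e.constr ℝ (fun i => (e.coord i (D (e i))) • e i)) ⁅e i, e j⁆
      = ⁅(e.constr ℝ (fun i => (e.coord i (D (e i))) • e i)) (e i), e j⁆
        + ⁅e i, (e.constr ℝ (fun i => (e.coord i (D (e i))) • e i)) (e j)⁆ := by
  set d : Fin n → ℝ := fun i => e.coord i (D (e i)) with hd
  set Δ : Module.End ℝ L := e.constr ℝ (fun i => d i • e i) with hΔdef
  have hΔ : ∀ k, Δ (e k) = d k • e k := fun k => e.constr_basis ℝ _ k
  obtain ⟨k, c, hc⟩ := he.1 i j
  rcases eq_or_ne c 0 with rfl | hc0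
  · simp only [hc, zero_smul, map_zero, hΔ, smul_lie, lie_smul, hc, smul_zero, add_zero]
  · have hck : e.coord k ⁅e i, e j⁆ = c := by simp [hc]
    have hkne : e.coord k ⁅e i, e j⁆ ≠ 0 := by rw [hck]; exact hc0
    have key : c * d k = d i * c + d j * c := by
      have h1 := congrArg (e.coord k) (hD (e i) (e j))
      rw [map_add, aux_coord_left e he.2 (D (e i)) i j k hkne,
        aux_coord_right e he.2 (D (e j)) i j k hkne, hck] at h1
      have h2 : e.coord k (D ⁅e i, e j⁆) = c * d k := by
        rw [hc, map_smul, map_smul]; simp [hd, mul_comm]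
      rw [h2] at h1
      linarith [h1]
    calc Δ ⁅e i, e j⁆ = (c * d k) • e k := by rw [hc, map_smul, hΔ, smul_smul]
      _ = (d i * c + d j * c) • e k := by rw [key]
      _ = ⁅Δ (e i), e j⁆ + ⁅e i, Δ (e j)⁆ := by
          rw [hΔ, hΔ, smul_lie, lie_smul, hc, add_smul, smul_smul, smul_smul]

lemma aux_deriv (e : Module.Basis (Fin n) ℝ L) (he : IsNiceBasis e)
    (D : Module.End ℝ L) (hD : ∀ x y : L, D ⁅x, y⁆ = ⁅D x, y⁆ + ⁅x, D y⁆) :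
    ∀ x y : L, (e.constr ℝ (fun i => (e.coord i (D (e i))) • e i)) ⁅x, y⁆
      = ⁅(e.constr ℝ (fun i => (e.coord i (D (e i))) • e i)) x, y⁆
        + ⁅x, (e.constr ℝ (fun i => (e.coord i (D (e i))) • e i)) y⁆ := by
  set Δ : Module.End ℝ L := e.constr ℝ (fun i => (e.coord i (D (e i))) • e i) with hΔdef
  let B : L →ₗ[ℝ] L →ₗ[ℝ] L := LinearMap.mk₂ ℝ
    (fun x y => Δ ⁅x, y⁆ - ⁅Δ x, y⁆ - ⁅x, Δ y⁆)
    (fun x x' y => by simp only [add_lie, map_add]; abel)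
    (fun c x y => by simp only [smul_lie, map_smul, smul_sub])
    (fun x y y' => by simp only [lie_add, map_add]; abel)
    (fun c x y => by simp only [lie_smul, map_smul, smul_sub])
  have hB : B = 0 := by
    refine e.ext fun i => e.ext fun j => ?_
    have := aux_basis_case e he D hD i j
    simp only [B, LinearMap.mk₂_apply, LinearMap.zero_apply, hΔdef]
    rw [this]; abel
  intro x y
  have h0 : Δ ⁅x, y⁆ - ⁅Δ x, y⁆ - ⁅x, Δ y⁆ = 0 := by
    have := congrFun (congrArg DFunLike.coe (LinearMap.congr_fun hB x)) y
    simpa [B] using this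
  rw [sub_sub] at h0
  exact sub_eq_zero.mp h0

end Aux2

/-- The diagonal part (relative to a nice basis) of a derivation is a derivation; hence
every derivation splits as a diagonal derivation plus a derivation with zero diagonal. -/
theorem diagonal_part_of_derivation_is_derivation
    {n : ℕ} {L : Type*} [LieRing L] [LieAlgebra ℝ L] [FiniteDimensional ℝ L]
    (e : Module.Basis (Fin n) ℝ L) (he : IsNiceBasis e)
    (D : Module.End ℝ L) (hD : ∀ x y : L, D ⁅x, y⁆ = ⁅D x, y⁆ + ⁅x, D y⁆) :
    letI Δ : Module.End ℝ L := e.constr ℝ (fun i => (e.coord i (D (e i))) • e i)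
    (∀ x y : L, Δ ⁅x, y⁆ = ⁅Δ x, y⁆ + ⁅x, Δ y⁆) ∧
    (∀ x y : L, (D - Δ) ⁅x, y⁆ = ⁅(D - Δ) x, y⁆ + ⁅x, (D - Δ) y⁆) ∧
    (∀ i : Fin n, e.coord i ((D - Δ) (e i)) = 0) ∧
    D = Δ + (D - Δ) := by
  have hder := aux_deriv e he D hD
  refine ⟨hder, ?_, ?_, by abel⟩
  · intro x y
    simp only [LinearMap.sub_apply, hD x y, hder x y, sub_lie, lie_sub]
    abel
  · intro i
    have : (e.constr ℝ (fun i => (e.coord i (D (e i))) • e i)) (e i)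
        = (e.coord i (D (e i))) • e i := e.constr_basis ℝ _ i
    simp [LinearMap.sub_apply, this]
end

section
/- Assume all a_{ji} ≠ 0, Tr D ≠ 0, and λ_i − λ_j = Tr D for every (i,j) ∈ 𝒜. Then D is diagonalizable over ℝ, i.e. ℝ^n admits a basis consisting of eigenvectors of D. -/
/-- The endomorphism `e^i ⊗ e_j` of `ℝ^n`, sending the standard basis vector `e i`
to `e j` and the other standard basis vectors to `0`. -/
noncomputable def elemEnd {n : ℕ} (i j : Fin n) : Module.End ℝ (Fin n → ℝ) :=
  (LinearMap.proj i : (Fin n → ℝ) →ₗ[ℝ] ℝ).smulRight (Pi.single j 1)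

/-- If all `a p ≠ 0`, `Tr D ≠ 0` and `λ i − λ j = Tr D` for all `(i,j) ∈ 𝒜`, then
`D = Σ λ_i e^i⊗e_i + Σ_{(i,j)∈𝒜} a_{ji} e^i⊗e_j` is diagonalizable over `ℝ`. -/
theorem nondiagonal_derivation_diagonalizable
    {n : ℕ} (hn : 1 ≤ n) (𝒜 : Finset (Fin n × Fin n))
    (hA₁ : ∀ p ∈ 𝒜, p.1 ≠ p.2)
    (hA₂ : ∀ p ∈ 𝒜, ∀ q ∈ 𝒜, p ≠ q →
      p.1 ≠ q.1 ∧ p.1 ≠ q.2 ∧ p.2 ≠ q.1 ∧ p.2 ≠ q.2)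
    (lam : Fin n → ℝ) (a : Fin n × Fin n → ℝ) (ha : ∀ p ∈ 𝒜, a p ≠ 0)
    (D : Module.End ℝ (Fin n → ℝ))
    (hD : D = (∑ i, lam i • elemEnd i i) + ∑ p ∈ 𝒜, a p • elemEnd p.1 p.2)
    (htr : LinearMap.trace ℝ (Fin n → ℝ) D ≠ 0)
    (hlam : ∀ p ∈ 𝒜, lam p.1 - lam p.2 = LinearMap.trace ℝ (Fin n → ℝ) D) :
    ∃ b : Module.Basis (Fin n) ℝ (Fin n → ℝ), ∀ i, ∃ μ : ℝ, D (b i) = μ • b i := by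
  set T := LinearMap.trace ℝ (Fin n → ℝ) D with hT
  set c : Fin n × Fin n → ℝ := fun p => a p / T with hc
  set N : Module.End ℝ (Fin n → ℝ) := ∑ p ∈ 𝒜, c p • elemEnd p.1 p.2 with hN
  have hfs : ∀ p ∈ 𝒜, ∀ q ∈ 𝒜, p.1 ≠ q.2 := by
    intro p hp q hq
    by_cases h : p = q
    · subst h; exact hA₁ p hp
    · exact (hA₂ p hp q hq h).2.1
  have hNapp : ∀ x : Fin n → ℝ,
      N x = ∑ p ∈ 𝒜, (c p * x p.1) • (Pi.single p.2 1 : Fin n → ℝ) := by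
    intro x
    simp [hN, LinearMap.sum_apply, elemEnd, smul_smul]
  have hDapp : ∀ x : Fin n → ℝ,
      D x = (∑ i, (lam i * x i) • (Pi.single i 1 : Fin n → ℝ))
      + ∑ p ∈ 𝒜, (a p * x p.1) • (Pi.single p.2 1 : Fin n → ℝ) := by
    intro x
    simp [hD, LinearMap.sum_apply, elemEnd, smul_smul]
  have hNN : ∀ x, N (N x) = 0 := by
    intro x
    rw [hNapp, hNapp]
    refine Finset.sum_eq_zero fun p hp => ?_
    have : (∑ q ∈ 𝒜, (c q * x q.1) • (Pi.single q.2 1 : Fin n → ℝ)) p.1 = 0 := by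
      rw [Finset.sum_apply]
      refine Finset.sum_eq_zero fun q hq => ?_
      simp [Pi.single_eq_of_ne (hfs p hp q hq)]
    rw [this, mul_zero, zero_smul]
  have hcomp1 : (LinearMap.id + N) ∘ₗ (LinearMap.id - N) = LinearMap.id := by
    refine LinearMap.ext fun x => ?_
    simp only [LinearMap.comp_apply, LinearMap.add_apply, LinearMap.sub_apply,
      LinearMap.id_apply, map_sub, map_add, hNN x]
    abel
  have hcomp2 : (LinearMap.id - N) ∘ₗ (LinearMap.id + N) = LinearMap.id := by
    refine LinearMap.ext fun x => ?_
    simp only [LinearMap.comp_apply, LinearMap.add_apply, LinearMap.sub_apply,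
      LinearMap.id_apply, map_sub, map_add, hNN x]
    abel
  let e : (Fin n → ℝ) ≃ₗ[ℝ] (Fin n → ℝ) :=
    LinearEquiv.ofLinear (LinearMap.id + N) (LinearMap.id - N) hcomp1 hcomp2
  refine ⟨(Pi.basisFun ℝ (Fin n)).map e, fun k => ?_⟩
  have hbk : ((Pi.basisFun ℝ (Fin n)).map e) k
      = (Pi.single k 1 : Fin n → ℝ) + N (Pi.single k 1) := by
    simp [e, LinearEquiv.ofLinear_apply, LinearMap.add_apply, Pi.basisFun_apply]
  by_cases h : ∃ p ∈ 𝒜, p.1 = k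
  · obtain ⟨p, hp, hpk⟩ := h
    subst hpk
    refine ⟨lam p.1, ?_⟩
    have huniq : ∀ q ∈ 𝒜, q ≠ p → q.1 ≠ p.1 := by
      intro q hq hqp
      exact (hA₂ q hq p hp hqp).1
    have hNs : N (Pi.single p.1 1) = c p • (Pi.single p.2 1 : Fin n → ℝ) := by
      rw [hNapp, Finset.sum_eq_single p]
      · simp
      · intro q hq hqp
        simp [Pi.single_eq_of_ne (huniq q hq hqp)]
      · intro hcontra; exact absurd hp hcontra
    have hDk : D (Pi.single p.1 1)
        = lam p.1 • (Pi.single p.1 1 : Fin n → ℝ) + a p • (Pi.single p.2 1 : Fin n → ℝ) := by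
      rw [hDapp]
      congr 1
      · rw [Finset.sum_eq_single p.1] <;> simp +contextual [Pi.single_eq_of_ne]
      · rw [Finset.sum_eq_single p]
        · simp
        · intro q hq hqp
          simp [Pi.single_eq_of_ne (huniq q hq hqp)]
        · intro hcontra; exact absurd hp hcontra
    have hD2 : D (Pi.single p.2 1) = lam p.2 • (Pi.single p.2 1 : Fin n → ℝ) := by
      rw [hDapp]
      have h1 : (∑ i, (lam i * (Pi.single p.2 1 : Fin n → ℝ) i) • (Pi.single i 1 : Fin n → ℝ))
          = lam p.2 • (Pi.single p.2 1 : Fin n → ℝ) := by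
        rw [Finset.sum_eq_single p.2] <;> simp +contextual [Pi.single_eq_of_ne]
      have h2 : (∑ q ∈ 𝒜, (a q * (Pi.single p.2 1 : Fin n → ℝ) q.1) • (Pi.single q.2 1 : Fin n → ℝ))
          = 0 := by
        refine Finset.sum_eq_zero fun q hq => ?_
        simp [Pi.single_eq_of_ne (hfs q hq p hp)]
      rw [h1, h2, add_zero]
    have key : a p + c p * lam p.2 = lam p.1 * c p := by
      have hl := hlam p hp
      
      show a p + (a p / T) * lam p.2 = lam p.1 * (a p / T)
      field_simp
      linear_combination (-(a p)) * hl
    rw [hbk, hNs, map_add, map_smul, hDk, hD2, smul_smul, smul_add,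
      smul_smul, add_assoc, ← add_smul, key]
  · refine ⟨lam k, ?_⟩
    push_neg at h
    have hNs : N (Pi.single k 1) = 0 := by
      rw [hNapp]
      refine Finset.sum_eq_zero fun q hq => ?_
      simp [Pi.single_eq_of_ne (h q hq)]
    have hDk : D (Pi.single k 1) = lam k • (Pi.single k 1 : Fin n → ℝ) := by
      rw [hDapp]
      have h1 : (∑ i, (lam i * (Pi.single k 1 : Fin n → ℝ) i) • (Pi.single i 1 : Fin n → ℝ))
          = lam k • (Pi.single k 1 : Fin n → ℝ) := by
        rw [Finset.sum_eq_single k] <;> simp +contextual [Pi.single_eq_of_ne]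
      have h2 : (∑ q ∈ 𝒜, (a q * (Pi.single k 1 : Fin n → ℝ) q.1) • (Pi.single q.2 1 : Fin n → ℝ))
          = 0 := by
        refine Finset.sum_eq_zero fun q hq => ?_
        simp [Pi.single_eq_of_ne (h q hq)]
      rw [h1, h2, add_zero]
    rw [hbk, hNs, add_zero, hDk]
end

section
/- With D, g, D* as above, the commutator satisfies [D,D*] = Σ_{(i,j)∈𝒜} ( a_{ji}(λ_i − λ_j)( (g_j/g_i) e^j⊗e_i + e^i⊗e_j ) + (g_j/g_i) a_{ji}² ( e^j⊗e_j − e^i⊗e_i ) ). -/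
lemma elemEnd_apply {n : ℕ} (i j : Fin n) (x : Fin n → ℝ) :
    elemEnd i j x = x i • (Pi.single j 1 : Fin n → ℝ) := rfl

lemma elemEnd_mul {n : ℕ} (i j k l : Fin n) :
    elemEnd i j * elemEnd k l = if l = i then elemEnd k j else 0 := by
  apply LinearMap.ext; intro x
  funext m
  show (elemEnd i j (elemEnd k l x)) m = _
  rw [elemEnd_apply, elemEnd_apply]
  by_cases h : l = i <;> simp [h, Pi.single_apply, elemEnd_apply]

lemma diag_mul_elem {n : ℕ} (lam : Fin n → ℝ) (k l : Fin n) :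
    (∑ i, lam i • elemEnd i i) * elemEnd k l = lam l • elemEnd k l := by
  rw [Finset.sum_mul]
  have h : ∀ i : Fin n, (lam i • elemEnd i i) * elemEnd k l
      = if l = i then lam i • elemEnd k i else 0 := by
    intro i; rw [smul_mul_assoc, elemEnd_mul]; split_ifs <;> simp
  rw [Finset.sum_congr rfl fun i _ => h i]
  simp

lemma elem_mul_diag {n : ℕ} (lam : Fin n → ℝ) (k l : Fin n) :
    elemEnd k l * (∑ i, lam i • elemEnd i i) = lam k • elemEnd k l := by
  rw [Finset.mul_sum]
  have h : ∀ i : Fin n, elemEnd k l * (lam i • elemEnd i i)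
      = if i = k then lam i • elemEnd i l else 0 := by
    intro i; rw [mul_smul_comm, elemEnd_mul]; split_ifs <;> simp
  rw [Finset.sum_congr rfl fun i _ => h i]
  simp


set_option maxHeartbeats 1000000 in
/-- The commutator `[D, D*]` of `D = Σ λ_i e^i⊗e_i + Σ_{(i,j)∈𝒜} a_{ji} e^i⊗e_j` with its
adjoint with respect to the diagonal metric `g = Σ g_i e^i⊗e^i`. -/
theorem commutator_with_adjoint
    {n : ℕ} (hn : 1 ≤ n) (𝒜 : Finset (Fin n × Fin n))
    (hA₁ : ∀ p ∈ 𝒜, p.1 ≠ p.2)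
    (hA₂ : ∀ p ∈ 𝒜, ∀ q ∈ 𝒜, p ≠ q →
      p.1 ≠ q.1 ∧ p.1 ≠ q.2 ∧ p.2 ≠ q.1 ∧ p.2 ≠ q.2)
    (lam : Fin n → ℝ) (a : Fin n × Fin n → ℝ) (ha : ∀ p ∈ 𝒜, a p ≠ 0)
    (D : Module.End ℝ (Fin n → ℝ))
    (hD : D = (∑ i, lam i • elemEnd i i) + ∑ p ∈ 𝒜, a p • elemEnd p.1 p.2)
    (gv : Fin n → ℝ) (hg : ∀ i, gv i ≠ 0)
    (Dstar : Module.End ℝ (Fin n → ℝ))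
    (hadj : ∀ x y : Fin n → ℝ,
      (∑ i, gv i * (D x) i * y i) = ∑ i, gv i * x i * (Dstar y) i) :
    D * Dstar - Dstar * D =
      ∑ p ∈ 𝒜, ((a p * (lam p.1 - lam p.2)) •
          ((gv p.2 / gv p.1) • elemEnd p.2 p.1 + elemEnd p.1 p.2) +
        (gv p.2 / gv p.1 * a p ^ 2) • (elemEnd p.2 p.2 - elemEnd p.1 p.1)) := by
  -- notation
  set Λ : Module.End ℝ (Fin n → ℝ) := ∑ i, lam i • elemEnd i i with hΛ
  set N : Module.End ℝ (Fin n → ℝ) := ∑ p ∈ 𝒜, a p • elemEnd p.1 p.2 with hN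
  set M : Module.End ℝ (Fin n → ℝ) :=
    ∑ p ∈ 𝒜, (gv p.2 / gv p.1 * a p) • elemEnd p.2 p.1 with hM
  -- coordinates of Dstar from the adjoint property
  have hDs : ∀ k l : Fin n, gv k * Dstar (Pi.single l 1) k = gv l * D (Pi.single k 1) l := by
    intro k l
    have h := hadj (Pi.single k 1) (Pi.single l 1)
    simpa [Pi.single_apply, mul_ite, ite_mul, Finset.sum_ite_eq, Finset.sum_ite_eq'] using h.symm
  -- Dstar explicitly
  have hDstar : Dstar = Λ + M := by
    apply Module.Basis.ext (Pi.basisFun ℝ (Fin n))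
    intro l
    funext k
    have hk := hg k
    apply mul_left_cancel₀ hk
    rw [show ((Pi.basisFun ℝ (Fin n)) l : Fin n → ℝ) = Pi.single l 1 by
      simp [Pi.basisFun_apply]]
    rw [hDs k l, hD]
    simp only [hΛ, hN, hM, LinearMap.add_apply, LinearMap.sum_apply, Pi.add_apply,
      Finset.sum_apply, LinearMap.smul_apply, Pi.smul_apply, elemEnd_apply, Pi.single_apply,
      smul_eq_mul, mul_ite, ite_mul, mul_one, mul_zero, zero_mul,
      Finset.sum_ite_eq, Finset.sum_ite_eq']
    rw [mul_add, mul_add, Finset.mul_sum, Finset.mul_sum]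
    congr 1
    · split_ifs <;> subst_vars <;> simp_all
    · refine Finset.sum_congr rfl fun p _ => ?_
      by_cases h1 : p.1 = k <;> by_cases h2 : p.2 = l
      · subst h1; subst h2
        simp only [if_pos rfl, if_true]
        field_simp
      · rw [if_neg fun h => h2 h.symm, if_pos h1.symm, if_neg h2]; simp
      · rw [if_pos h2.symm, if_neg h1, if_neg fun h => h1 h.symm]; simp
      · rw [if_neg fun h => h2 h.symm, if_neg fun h => h1 h.symm]; simp
  rw [hD, hDstar]
  have hΛM : Λ * M = ∑ p ∈ 𝒜, (lam p.1 * (gv p.2 / gv p.1 * a p)) • elemEnd p.2 p.1 := by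
    rw [hΛ, hM, Finset.mul_sum]
    exact Finset.sum_congr rfl fun p _ => by
      rw [mul_smul_comm, diag_mul_elem, smul_smul, mul_comm]
  have hMΛ : M * Λ = ∑ p ∈ 𝒜, (lam p.2 * (gv p.2 / gv p.1 * a p)) • elemEnd p.2 p.1 := by
    rw [hΛ, hM, Finset.sum_mul]
    exact Finset.sum_congr rfl fun p _ => by
      rw [smul_mul_assoc, elem_mul_diag, smul_smul, mul_comm]
  have hΛN : Λ * N = ∑ p ∈ 𝒜, (lam p.2 * a p) • elemEnd p.1 p.2 := by
    rw [hΛ, hN, Finset.mul_sum]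
    exact Finset.sum_congr rfl fun p _ => by
      rw [mul_smul_comm, diag_mul_elem, smul_smul, mul_comm]
  have hNΛ : N * Λ = ∑ p ∈ 𝒜, (lam p.1 * a p) • elemEnd p.1 p.2 := by
    rw [hΛ, hN, Finset.sum_mul]
    exact Finset.sum_congr rfl fun p _ => by
      rw [smul_mul_assoc, elem_mul_diag, smul_smul, mul_comm]
  have hNM : N * M = ∑ p ∈ 𝒜, (a p * (gv p.2 / gv p.1 * a p)) • elemEnd p.2 p.2 := by
    rw [hN, hM, Finset.sum_mul_sum]
    refine Finset.sum_congr rfl fun p hp => ?_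
    rw [Finset.sum_eq_single p]
    · rw [smul_mul_assoc, mul_smul_comm, elemEnd_mul, if_pos rfl, smul_smul]
    · intro q hq hne
      have h := (hA₂ q hq p hp hne).1
      rw [smul_mul_assoc, mul_smul_comm, elemEnd_mul, if_neg h]
      simp
    · intro h; exact absurd hp h
  have hMN : M * N = ∑ p ∈ 𝒜, ((gv p.2 / gv p.1 * a p) * a p) • elemEnd p.1 p.1 := by
    rw [hN, hM, Finset.sum_mul_sum]
    refine Finset.sum_congr rfl fun p hp => ?_
    rw [Finset.sum_eq_single p]
    · rw [smul_mul_assoc, mul_smul_comm, elemEnd_mul, if_pos rfl, smul_smul]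
    · intro q hq hne
      have h := (hA₂ q hq p hp hne).2.2.2
      rw [smul_mul_assoc, mul_smul_comm, elemEnd_mul, if_neg h]
      simp
    · intro h; exact absurd hp h
  have expand : (Λ + N) * (Λ + M) - (Λ + M) * (Λ + N)
      = (Λ * M + N * Λ + N * M) - (M * Λ + Λ * N + M * N) := by noncomm_ring
  rw [expand, hΛM, hNΛ, hNM, hMΛ, hΛN, hMN,
    ← Finset.sum_add_distrib, ← Finset.sum_add_distrib, ← Finset.sum_add_distrib,
    ← Finset.sum_add_distrib, ← Finset.sum_sub_distrib]
  refine Finset.sum_congr rfl fun p hp => ?_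
  match_scalars <;> ring
end

section
/- With D, g, D*, D^s as above, assume all a_{ji} ≠ 0 and Tr D ≠ 0. Then the endomorphism −½[D,D*] + (Tr D)·D^s is diagonal in the standard basis if and only if λ_i − λ_j = Tr D for every (i,j) ∈ 𝒜. -/
lemma elemEnd_apply' {n : ℕ} (i' j' : Fin n) (v : Fin n → ℝ) (i : Fin n) :
    elemEnd i' j' v i = v i' * (if i = j' then 1 else 0) := by
  simp [elemEnd, Pi.single_apply]

lemma sum_two' {n : ℕ} (i j : Fin n) (hij : i ≠ j) (t : Fin n → ℝ)
    (h : ∀ k, k ≠ i → k ≠ j → t k = 0) : ∑ k, t k = t i + t j := by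
  have h2 : ∀ k : Fin n, t k = (if i = k then t i else 0) + (if j = k then t j else 0) := by
    intro k
    by_cases hki : k = i
    · subst hki; simp [Ne.symm hij]
    · by_cases hkj : k = j
      · subst hkj; simp [hij]
      · rw [h k hki hkj, if_neg (fun h' => hki h'.symm), if_neg (fun h' => hkj h'.symm)]; ring
  rw [Finset.sum_congr rfl (fun k _ => h2 k), Finset.sum_add_distrib,
    Finset.sum_ite_eq, Finset.sum_ite_eq]
  simp

lemma entryD' {n : ℕ} (𝒜 : Finset (Fin n × Fin n)) (lam : Fin n → ℝ)
    (a : Fin n × Fin n → ℝ)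
    (D : Module.End ℝ (Fin n → ℝ))
    (hD : D = (∑ i, lam i • elemEnd i i) + ∑ p ∈ 𝒜, a p • elemEnd p.1 p.2)
    (i j : Fin n) :
    D (Pi.single j 1) i = (if i = j then lam i else 0) +
      (if (j, i) ∈ 𝒜 then a (j, i) else 0) := by
  rw [hD]
  simp only [LinearMap.add_apply, LinearMap.sum_apply, LinearMap.smul_apply,
    Pi.add_apply, Finset.sum_apply, Pi.smul_apply, smul_eq_mul, elemEnd_apply',
    Pi.single_apply]
  congr 1
  · rw [Finset.sum_eq_single i]
    · by_cases h : i = j <;> simp [h]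
    · intro b _ hb
      by_cases h1 : i = b
      · exact absurd h1.symm hb
      · simp [h1]
    · simp
  · by_cases hm : (j, i) ∈ 𝒜
    · rw [if_pos hm, Finset.sum_eq_single (j, i)]
      · simp
      · intro b hb hne
        by_cases h2 : i = b.2
        · by_cases h1 : b.1 = j
          · exact absurd (Prod.ext h1 h2.symm) hne
          · simp [h1]
        · simp [h2]
      · intro h; exact absurd hm h
    · rw [if_neg hm]
      apply Finset.sum_eq_zero
      intro b hb
      by_cases h2 : i = b.2
      · by_cases h1 : b.1 = j
        · exact absurd ((Prod.ext h1 h2.symm : b = (j, i)) ▸ hb) hm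
        · simp [h1]
      · simp [h2]

lemma entryStar' {n : ℕ} (gv : Fin n → ℝ) (hg : ∀ i, gv i ≠ 0)
    (D Dstar : Module.End ℝ (Fin n → ℝ))
    (hadj : ∀ x y : Fin n → ℝ,
      (∑ i, gv i * (D x) i * y i) = ∑ i, gv i * x i * (Dstar y) i)
    (i j : Fin n) :
    Dstar (Pi.single j 1) i = gv j / gv i * D (Pi.single i 1) j := by
  have h := hadj (Pi.single i 1) (Pi.single j 1)
  rw [Finset.sum_eq_single j, Finset.sum_eq_single i] at h
  · simp only [Pi.single_apply, if_pos rfl, mul_one] at h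
    field_simp [hg i] at h ⊢
    linear_combination -h
  · intro b _ hb; simp [Pi.single_apply, Ne.symm hb]
  · simp
  · intro b _ hb; simp [Pi.single_apply, Ne.symm hb]
  · simp

lemma mulEntry' {n : ℕ} (f g : Module.End ℝ (Fin n → ℝ)) (i j : Fin n) :
    (f * g) (Pi.single j 1) i = ∑ k, g (Pi.single j 1) k * f (Pi.single k 1) i := by
  have hv : g (Pi.single j 1) = ∑ k, g (Pi.single j 1) k • (Pi.single k 1 : Fin n → ℝ) := by
    funext m
    rw [Finset.sum_apply, Finset.sum_eq_single m]
    · simp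
    · intro b _ hb; simp [Pi.single_apply, Ne.symm hb]
    · simp
  calc (f * g) (Pi.single j 1) i = f (g (Pi.single j 1)) i := rfl
    _ = f (∑ k, g (Pi.single j 1) k • (Pi.single k 1 : Fin n → ℝ)) i := by rw [← hv]
    _ = ∑ k, g (Pi.single j 1) k * f (Pi.single k 1) i := by
        rw [map_sum]
        simp [Finset.sum_apply]

/-- The endomorphism `−½[D,D*] + (Tr D)·D^s` is diagonal in the standard basis if and
only if `λ i − λ j = Tr D` for every `(i,j) ∈ 𝒜`. -/
theorem offdiagonal_condition
    {n : ℕ} (hn : 1 ≤ n) (𝒜 : Finset (Fin n × Fin n))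
    (hA₁ : ∀ p ∈ 𝒜, p.1 ≠ p.2)
    (hA₂ : ∀ p ∈ 𝒜, ∀ q ∈ 𝒜, p ≠ q →
      p.1 ≠ q.1 ∧ p.1 ≠ q.2 ∧ p.2 ≠ q.1 ∧ p.2 ≠ q.2)
    (lam : Fin n → ℝ) (a : Fin n × Fin n → ℝ) (ha : ∀ p ∈ 𝒜, a p ≠ 0)
    (D : Module.End ℝ (Fin n → ℝ))
    (hD : D = (∑ i, lam i • elemEnd i i) + ∑ p ∈ 𝒜, a p • elemEnd p.1 p.2)
    (htr : LinearMap.trace ℝ (Fin n → ℝ) D ≠ 0)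
    (gv : Fin n → ℝ) (hg : ∀ i, gv i ≠ 0)
    (Dstar : Module.End ℝ (Fin n → ℝ))
    (hadj : ∀ x y : Fin n → ℝ,
      (∑ i, gv i * (D x) i * y i) = ∑ i, gv i * x i * (Dstar y) i)
    (Ds : Module.End ℝ (Fin n → ℝ)) (hDs : Ds = (1 / 2 : ℝ) • (D + Dstar)) :
    (∀ i j : Fin n, i ≠ j →
        ((-(1 / 2 : ℝ)) • (D * Dstar - Dstar * D) +
          LinearMap.trace ℝ (Fin n → ℝ) D • Ds) (Pi.single j 1) i = 0) ↔
      ∀ p ∈ 𝒜, lam p.1 - lam p.2 = LinearMap.trace ℝ (Fin n → ℝ) D := by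
  set T := LinearMap.trace ℝ (Fin n → ℝ) D with hT
  have hd : ∀ i j : Fin n, D (Pi.single j 1) i = (if i = j then lam i else 0) +
      (if (j, i) ∈ 𝒜 then a (j, i) else 0) := entryD' 𝒜 lam a D hD
  have hdd : ∀ i : Fin n, D (Pi.single i 1) i = lam i := by
    intro i
    rw [hd]
    simp [show (i, i) ∉ 𝒜 from fun h => hA₁ (i, i) h rfl]
  have hdo : ∀ i j : Fin n, i ≠ j →
      D (Pi.single j 1) i = (if (j, i) ∈ 𝒜 then a (j, i) else 0) := by
    intro i j hij
    rw [hd, if_neg hij, zero_add]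
  have hs : ∀ i j : Fin n, Dstar (Pi.single j 1) i = gv j / gv i * D (Pi.single i 1) j :=
    entryStar' gv hg D Dstar hadj
  -- vanishing of products of two off-diagonal entries in the same "column"
  have hvan1 : ∀ i j k : Fin n, i ≠ j → k ≠ i → k ≠ j →
      D (Pi.single k 1) j * D (Pi.single k 1) i = 0 := by
    intro i j k hij hki hkj
    rw [hdo j k (fun h => hkj h.symm), hdo i k (fun h => hki h.symm)]
    by_cases h1 : (k, j) ∈ 𝒜
    · by_cases h2 : (k, i) ∈ 𝒜
      · exfalso
        have hne : ((k, j) : Fin n × Fin n) ≠ (k, i) :=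
          fun h => hij (congrArg Prod.snd h).symm
        exact (hA₂ (k, j) h1 (k, i) h2 hne).1 rfl
      · simp [h2]
    · simp [h1]
  have hvan2 : ∀ i j k : Fin n, i ≠ j → k ≠ i → k ≠ j →
      D (Pi.single j 1) k * D (Pi.single i 1) k = 0 := by
    intro i j k hij hki hkj
    rw [hdo k j hkj, hdo k i hki]
    by_cases h1 : (j, k) ∈ 𝒜
    · by_cases h2 : (i, k) ∈ 𝒜
      · exfalso
        have hne : ((j, k) : Fin n × Fin n) ≠ (i, k) :=
          fun h => hij (congrArg Prod.fst h).symm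
        exact (hA₂ (j, k) h1 (i, k) h2 hne).2.2.2 rfl
      · simp [h2]
    · simp [h1]
  have key : ∀ i j : Fin n, i ≠ j →
      ((-(1 / 2 : ℝ)) • (D * Dstar - Dstar * D) + T • Ds) (Pi.single j 1) i
        = 1 / 2 * (D (Pi.single j 1) i * (lam i - lam j + T)
            + gv j / gv i * D (Pi.single i 1) j * (T - (lam i - lam j))) := by
    intro i j hij
    have hm1 : (D * Dstar) (Pi.single j 1) i
        = gv j / gv i * D (Pi.single i 1) j * lam i + lam j * D (Pi.single j 1) i := by
      rw [mulEntry', sum_two' i j hij _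
        (by
          intro k hki hkj
          show Dstar (Pi.single j 1) k * D (Pi.single k 1) i = 0
          rw [hs]
          have h0 := hvan1 i j k hij hki hkj
          calc gv j / gv k * D (Pi.single k 1) j * D (Pi.single k 1) i
              = gv j / gv k * (D (Pi.single k 1) j * D (Pi.single k 1) i) := by ring
            _ = 0 := by rw [h0, mul_zero])]
      show Dstar (Pi.single j 1) i * D (Pi.single i 1) i
          + Dstar (Pi.single j 1) j * D (Pi.single j 1) i = _
      rw [hs, hs, hdd, hdd, div_self (hg j)]
      ring
    have hm2 : (Dstar * D) (Pi.single j 1) i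
        = D (Pi.single j 1) i * lam i + lam j * (gv j / gv i) * D (Pi.single i 1) j := by
      rw [mulEntry', sum_two' i j hij _
        (by
          intro k hki hkj
          show D (Pi.single j 1) k * Dstar (Pi.single k 1) i = 0
          rw [hs]
          have h0 := hvan2 i j k hij hki hkj
          calc D (Pi.single j 1) k * (gv k / gv i * D (Pi.single i 1) k)
              = gv k / gv i * (D (Pi.single j 1) k * D (Pi.single i 1) k) := by ring
            _ = 0 := by rw [h0, mul_zero])]
      show D (Pi.single j 1) i * Dstar (Pi.single i 1) i
          + D (Pi.single j 1) j * Dstar (Pi.single j 1) i = _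
      rw [hs, hs, hdd, hdd, div_self (hg i)]
      ring
    have hds : Ds (Pi.single j 1) i
        = 1 / 2 * (D (Pi.single j 1) i + gv j / gv i * D (Pi.single i 1) j) := by
      rw [hDs]
      simp only [LinearMap.smul_apply, LinearMap.add_apply, Pi.smul_apply, Pi.add_apply,
        smul_eq_mul]
      rw [hs]
    simp only [LinearMap.add_apply, LinearMap.smul_apply, LinearMap.sub_apply,
      Pi.add_apply, Pi.smul_apply, Pi.sub_apply, smul_eq_mul]
    rw [hm1, hm2, hds]
    ring
  constructor
  · intro h p hp
    obtain ⟨i, j⟩ := p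
    have hij : i ≠ j := hA₁ (i, j) hp
    have h0 := h j i hij.symm
    rw [key j i hij.symm] at h0
    have e1 : D (Pi.single i 1) j = a (i, j) := by
      rw [hdo j i hij.symm, if_pos hp]
    have e2 : D (Pi.single j 1) i = 0 := by
      rw [hdo i j hij]
      rw [if_neg]
      intro hji
      have hne : ((i, j) : Fin n × Fin n) ≠ (j, i) := fun h' => hij (congrArg Prod.fst h')
      exact (hA₂ (i, j) hp (j, i) hji hne).2.1 rfl
    rw [e1] at h0
    rw [hdo i j hij] at h0
    by_cases hji : (j, i) ∈ 𝒜
    · exfalso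
      have hne : ((i, j) : Fin n × Fin n) ≠ (j, i) := fun h' => hij (congrArg Prod.fst h')
      exact (hA₂ (i, j) hp (j, i) hji hne).2.1 rfl
    · rw [if_neg hji] at h0
      have h1 : a (i, j) * (lam j - lam i + T) = 0 := by linear_combination 2 * h0
      rcases mul_eq_zero.mp h1 with h2 | h2
      · exact absurd h2 (ha (i, j) hp)
      · simp only
        linarith
  · intro h i j hij
    rw [key i j hij, hdo i j hij, hdo j i hij.symm]
    by_cases h1 : (j, i) ∈ 𝒜
    · have h2 : (i, j) ∉ 𝒜 := by
        intro h2
        have hne : ((j, i) : Fin n × Fin n) ≠ (i, j) := fun h' => hij (congrArg Prod.snd h')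
        exact (hA₂ (j, i) h1 (i, j) h2 hne).2.1 rfl
      rw [if_pos h1, if_neg h2]
      have := h (j, i) h1
      simp only at this
      linear_combination (-(1 / 2) * a (j, i)) * this
    · rw [if_neg h1]
      by_cases h2 : (i, j) ∈ 𝒜
      · rw [if_pos h2]
        have := h (i, j) h2
        simp only at this
        linear_combination (-(1 / 2) * (gv j / gv i) * a (i, j)) * this
      · rw [if_neg h2]; ring
end

section
/- Let 𝔤 be a nilpotent finite-dimensional real Lie algebra with a nice basis e_1,…,e_n. Then e^l([v, e_l]) = 0 for every v ∈ 𝔤 and every index l; consequently, Tr(ad v ∘ T) = 0 for every v ∈ 𝔤 and every endomorphism T of 𝔤 that is diagonal in the nice basis. -/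
/-- On a nilpotent Lie algebra with a nice basis, `e^l ⁅v, e l⁆ = 0` for every `v` and
every `l`; consequently `Tr(ad v ∘ T) = 0` for every endomorphism `T` that is diagonal
in the nice basis. -/
theorem trace_ad_comp_diagonal_eq_zero
    {n : ℕ} {L : Type*} [LieRing L] [LieAlgebra ℝ L] [FiniteDimensional ℝ L]
    [LieRing.IsNilpotent L]
    (e : Module.Basis (Fin n) ℝ L) (he : IsNiceBasis e) :
    (∀ (v : L) (l : Fin n), e.coord l ⁅v, e l⁆ = 0) ∧
    (∀ (v : L) (T : Module.End ℝ L), (∀ j : Fin n, ∃ c : ℝ, T (e j) = c • e j) →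
      LinearMap.trace ℝ L ((LieAlgebra.ad ℝ L v : Module.End ℝ L) ∘ₗ T) = 0) := by
  -- first: the statement for basis vectors
  have key : ∀ (i l : Fin n), e.coord l ⁅e i, e l⁆ = 0 := by
    intro i l
    by_contra hc
    obtain ⟨k, c, hk⟩ := he.1 i l
    have hkl : k = l := by
      by_contra hkl
      apply hc
      simp [hk, Module.Basis.coord_apply, Finsupp.single_apply, hkl]
    rw [hkl] at hk
    have hc' : c ≠ 0 := by
      intro h0
      apply hc
      simp [hk, h0]
    -- so e l is an eigenvector of ad (e i) with nonzero eigenvalue c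
    have had : (LieAlgebra.ad ℝ L (e i)) (e l) = c • e l := by
      simpa using hk
    have hev : (LieAlgebra.ad ℝ L (e i)).HasEigenvalue c := by
      apply Module.End.hasEigenvalue_of_hasEigenvector (x := e l)
      exact ⟨Module.End.mem_eigenspace_iff.2 had, e.ne_zero l⟩
    obtain ⟨m, hm⟩ := LieAlgebra.nilpotent_ad_of_nilpotent_algebra ℝ L
    have : IsNilpotent c := hev.isNilpotent_of_isNilpotent ⟨m, hm (e i)⟩
    exact hc' this.eq_zero
  have key' : ∀ (v : L) (l : Fin n), e.coord l ⁅v, e l⁆ = 0 := by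
    intro v l
    let f : L →ₗ[ℝ] ℝ :=
      { toFun := fun w => e.coord l ⁅w, e l⁆
        map_add' := fun x y => by simp [add_lie]
        map_smul' := fun c x => by simp [smul_lie] }
    have hf : ∀ w, f w = e.coord l ⁅w, e l⁆ := fun w => rfl
    rw [← hf, ← e.sum_repr v, map_sum]
    refine Finset.sum_eq_zero fun i _ => ?_
    rw [map_smul, hf, key i l, smul_eq_mul, mul_zero]
  refine ⟨key', fun v T hT => ?_⟩
  rw [LinearMap.trace_eq_matrix_trace ℝ e, Matrix.trace]
  apply Finset.sum_eq_zero
  intro l _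
  obtain ⟨c, hc⟩ := hT l
  simp only [Matrix.diag_apply, LinearMap.toMatrix_apply, LinearMap.comp_apply, hc,
    map_smul, LieAlgebra.ad_apply]
  have := key' v l
  rw [Module.Basis.coord_apply] at this
  simp [this]
end

section
/- Let 𝔤₁ be the real Lie algebra with basis e_1, e_2, e_3, e_4 and nonzero brackets [e_1,e_2] = (4/7)e_3, [e_4,e_1] = (6/7)e_1 + (8/7)e_2, [e_4,e_2] = −(2/7)e_2, [e_4,e_3] = (4/7)e_3, and let 𝔤₂ be the real Lie algebra with basis f_1, f_2, f_3, f_4 and nonzero brackets [f_1,f_2] = (√3/3)f_3, [f_4,f_1] = (√3/6)f_1, [f_4,f_2] = (√3/6)f_2, [f_4,f_3] = (√3/3)f_3. Then 𝔤₁ and 𝔤₂ are solvable Lie algebras and they are not isomorphic as real Lie algebras. -/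
open LieAlgebra

attribute [local instance 100] LieRing.ofAssociativeRing

private lemma sum_lie' {L : Type*} [LieRing L] [LieAlgebra ℝ L] {ι : Type*} (s : Finset ι)
    (g : ι → L) (y : L) : ⁅∑ i ∈ s, g i, y⁆ = ∑ i ∈ s, ⁅g i, y⁆ :=
  sum_lie s g y

private lemma lie_left_mem' {L : Type*} [LieRing L] [LieAlgebra ℝ L]
    (b : Module.Basis (Fin 4) ℝ L) (S : Submodule ℝ L) (y : L)
    (h : ∀ i, ⁅b i, y⁆ ∈ S) (x : L) : ⁅x, y⁆ ∈ S := by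
  rw [← b.sum_repr x, sum_lie']
  exact Submodule.sum_mem _ fun i _ => by rw [smul_lie]; exact S.smul_mem _ (h i)

private lemma lie_mem_span' {L : Type*} [LieRing L] [LieAlgebra ℝ L]
    (b : Module.Basis (Fin 4) ℝ L) (S : Submodule ℝ L) (s : Set L)
    (h : ∀ i, ∀ y ∈ s, ⁅b i, y⁆ ∈ S) (x m : L) (hm : m ∈ Submodule.span ℝ s) :
    ⁅x, m⁆ ∈ S := by
  induction hm using Submodule.span_induction with
  | mem y hy => exact lie_left_mem' b S y (fun i => h i y hy) x
  | zero => simp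
  | add u v _ _ hu hv => rw [lie_add]; exact S.add_mem hu hv
  | smul a u _ hu => rw [lie_smul]; exact S.smul_mem a hu

private lemma lie_span_span' {L : Type*} [LieRing L] [LieAlgebra ℝ L]
    (S : Submodule ℝ L) (s t : Set L)
    (h : ∀ a ∈ s, ∀ c ∈ t, ⁅a, c⁆ ∈ S) :
    ∀ m ∈ Submodule.span ℝ s, ∀ n ∈ Submodule.span ℝ t, ⁅m, n⁆ ∈ S := by
  have step : ∀ a ∈ s, ∀ n ∈ Submodule.span ℝ t, ⁅a, n⁆ ∈ S := by
    intro a ha n hn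
    induction hn using Submodule.span_induction with
    | mem y hy => exact h a ha y hy
    | zero => simp
    | add u v _ _ hu hv => rw [lie_add]; exact S.add_mem hu hv
    | smul r u _ hu => rw [lie_smul]; exact S.smul_mem r hu
  intro m hm n hn
  induction hm using Submodule.span_induction with
  | mem y hy => exact step y hy n hn
  | zero => simp
  | add u v _ _ hu hv => rw [add_lie]; exact S.add_mem hu hv
  | smul r u _ hu => rw [smul_lie]; exact S.smul_mem r hu

set_option linter.unreachableTactic false in
set_option linter.unusedTactic false in
private lemma solvable_of_table' {L : Type*} [LieRing L] [LieAlgebra ℝ L]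
    (b : Module.Basis (Fin 4) ℝ L) (c₁ c₂ : ℝ)
    (h01 : ⁅b 0, b 1⁆ = c₁ • b 2)
    (h02 : ⁅b 0, b 2⁆ = 0) (h12 : ⁅b 1, b 2⁆ = 0)
    (h30 : ⁅b 3, b 0⁆ ∈ Submodule.span ℝ ({b 0, b 1, b 2} : Set L))
    (h31 : ⁅b 3, b 1⁆ ∈ Submodule.span ℝ ({b 0, b 1, b 2} : Set L))
    (h32 : ⁅b 3, b 2⁆ = c₂ • b 2) :
    LieAlgebra.IsSolvable L := by
  set S : Submodule ℝ L := Submodule.span ℝ ({b 0, b 1, b 2} : Set L) with hS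
  set Z : Submodule ℝ L := Submodule.span ℝ ({b 2} : Set L) with hZ
  have m2 : b 2 ∈ S := Submodule.subset_span (by simp)
  have z2 : b 2 ∈ Z := Submodule.subset_span (by simp)
  have tab : ∀ i j, ⁅b i, b j⁆ ∈ S := by
    have n01 : ⁅b 0, b 1⁆ ∈ S := by rw [h01]; exact S.smul_mem _ m2
    have n02 : ⁅b 0, b 2⁆ ∈ S := by rw [h02]; exact S.zero_mem
    have n12 : ⁅b 1, b 2⁆ ∈ S := by rw [h12]; exact S.zero_mem
    have n32 : ⁅b 3, b 2⁆ ∈ S := by rw [h32]; exact S.smul_mem _ m2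
    have n10 : ⁅b 1, b 0⁆ ∈ S := by rw [← lie_skew]; exact S.neg_mem n01
    have n20 : ⁅b 2, b 0⁆ ∈ S := by rw [← lie_skew]; exact S.neg_mem n02
    have n21 : ⁅b 2, b 1⁆ ∈ S := by rw [← lie_skew]; exact S.neg_mem n12
    have n03 : ⁅b 0, b 3⁆ ∈ S := by rw [← lie_skew]; exact S.neg_mem h30
    have n13 : ⁅b 1, b 3⁆ ∈ S := by rw [← lie_skew]; exact S.neg_mem h31
    have n23 : ⁅b 2, b 3⁆ ∈ S := by rw [← lie_skew]; exact S.neg_mem n32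
    intro i j
    fin_cases i <;> fin_cases j <;>
      first
        | (rw [lie_self]; exact S.zero_mem)
        | exact n01 | exact n02 | exact n12 | exact n32 | exact n10 | exact n20
        | exact n21 | exact n03 | exact n13 | exact n23 | exact h30 | exact h31
  have tabZ2 : ∀ i, ⁅b i, b 2⁆ ∈ Z := by
    have u0 : ⁅b 0, b 2⁆ ∈ Z := by rw [h02]; exact Z.zero_mem
    have u1 : ⁅b 1, b 2⁆ ∈ Z := by rw [h12]; exact Z.zero_mem
    have u2 : ⁅b 2, b 2⁆ ∈ Z := by rw [lie_self]; exact Z.zero_mem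
    have u3 : ⁅b 3, b 2⁆ ∈ Z := by rw [h32]; exact Z.smul_mem _ z2
    intro i
    fin_cases i <;> first | exact u0 | exact u1 | exact u2 | exact u3
  have tabZ : ∀ x ∈ ({b 0, b 1, b 2} : Set L), ∀ y ∈ ({b 0, b 1, b 2} : Set L), ⁅x, y⁆ ∈ Z := by
    intro x hx y hy
    simp only [Set.mem_insert_iff, Set.mem_singleton_iff] at hx hy
    have v01 : ⁅b 0, b 1⁆ ∈ Z := by rw [h01]; exact Z.smul_mem _ z2
    rcases hx with rfl | rfl | rfl <;> rcases hy with rfl | rfl | rfl <;>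
      first
        | (rw [lie_self]; exact Z.zero_mem)
        | exact v01
        | exact tabZ2 0 | exact tabZ2 1 | exact tabZ2 2
        | (rw [← lie_skew]
           first
             | exact Z.neg_mem v01
             | exact Z.neg_mem (tabZ2 0) | exact Z.neg_mem (tabZ2 1) | exact Z.neg_mem (tabZ2 2))
  let N : LieIdeal ℝ L :=
    { S with
      lie_mem := fun {x m} hm => by
        refine lie_mem_span' b S ({b 0, b 1, b 2} : Set L) (fun i y hy => ?_) x m hm
        simp only [Set.mem_insert_iff, Set.mem_singleton_iff] at hy
        rcases hy with rfl | rfl | rfl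
        · exact tab i 0
        · exact tab i 1
        · exact tab i 2 }
  let Z' : LieIdeal ℝ L :=
    { Z with
      lie_mem := fun {x m} hm => by
        refine lie_mem_span' b Z ({b 2} : Set L) (fun i y hy => ?_) x m hm
        rw [Set.mem_singleton_iff] at hy; subst hy
        exact tabZ2 i }
  have d1 : derivedSeries ℝ L 1 ≤ N := by
    rw [derivedSeries_def, derivedSeriesOfIdeal_succ, derivedSeriesOfIdeal_zero,
      LieSubmodule.lieIdeal_oper_eq_span, LieSubmodule.lieSpan_le]
    rintro m ⟨x, y, rfl⟩
    show ⁅(x : L), (y : L)⁆ ∈ S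
    refine lie_left_mem' b S y (fun i => ?_) x
    rw [← lie_skew]
    exact S.neg_mem (lie_left_mem' b S (b i) (fun j => tab j i) y)
  have d2 : derivedSeries ℝ L 2 ≤ Z' := by
    have h2 : derivedSeries ℝ L 2 ≤ ⁅N, N⁆ := by
      rw [show (2 : ℕ) = 1 + 1 from rfl, derivedSeries_def, derivedSeriesOfIdeal_succ,
        ← derivedSeries_def]
      exact LieSubmodule.mono_lie d1 d1
    refine h2.trans ?_
    rw [LieSubmodule.lieIdeal_oper_eq_span, LieSubmodule.lieSpan_le]
    rintro m ⟨x, y, rfl⟩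
    show ⁅(x : L), (y : L)⁆ ∈ Z
    exact lie_span_span' Z _ _ tabZ x x.2 y y.2
  have d3 : derivedSeries ℝ L 3 = ⊥ := by
    rw [show (3 : ℕ) = 2 + 1 from rfl, derivedSeries_def, derivedSeriesOfIdeal_succ,
      ← derivedSeries_def, eq_bot_iff]
    calc ⁅derivedSeries ℝ L 2, derivedSeries ℝ L 2⁆ ≤ ⁅Z', Z'⁆ :=
          LieSubmodule.mono_lie d2 d2
      _ ≤ ⊥ := by
          rw [LieSubmodule.lieIdeal_oper_eq_span, LieSubmodule.lieSpan_le]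
          rintro m ⟨x, y, rfl⟩
          obtain ⟨a, ha⟩ := Submodule.mem_span_singleton.mp (x.2 : (x : L) ∈ Z)
          obtain ⟨c, hc⟩ := Submodule.mem_span_singleton.mp (y.2 : (y : L) ∈ Z)
          have h0 : ⁅(x : L), (y : L)⁆ = 0 := by
            rw [← ha, ← hc, smul_lie, lie_smul, lie_self, smul_zero, smul_zero]
          simp [h0]
  exact IsSolvable.mk d3

set_option maxHeartbeats 1000000 in
/-- The Lie algebras `𝔤₁ = (6/7 e¹⁴, 8/7 e¹⁴ − 2/7 e²⁴, 4/7 e¹² + 4/7 e³⁴, 0)` and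
`𝔤₂ = (√3/6 e¹⁴, √3/6 e²⁴, √3/3 e¹² + √3/3 e³⁴, 0)` are solvable and not isomorphic. -/
theorem solvable_extensions_not_isomorphic
    {L₁ L₂ : Type*} [LieRing L₁] [LieAlgebra ℝ L₁] [LieRing L₂] [LieAlgebra ℝ L₂]
    (e : Module.Basis (Fin 4) ℝ L₁) (f : Module.Basis (Fin 4) ℝ L₂)
    (h12 : ⁅e 0, e 1⁆ = (4 / 7 : ℝ) • e 2)
    (h13 : ⁅e 0, e 2⁆ = 0)
    (h23 : ⁅e 1, e 2⁆ = 0)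
    (h41 : ⁅e 3, e 0⁆ = (6 / 7 : ℝ) • e 0 + (8 / 7 : ℝ) • e 1)
    (h42 : ⁅e 3, e 1⁆ = (-(2 / 7) : ℝ) • e 1)
    (h43 : ⁅e 3, e 2⁆ = (4 / 7 : ℝ) • e 2)
    (h12' : ⁅f 0, f 1⁆ = (Real.sqrt 3 / 3) • f 2)
    (h13' : ⁅f 0, f 2⁆ = 0)
    (h23' : ⁅f 1, f 2⁆ = 0)
    (h41' : ⁅f 3, f 0⁆ = (Real.sqrt 3 / 6) • f 0)
    (h42' : ⁅f 3, f 1⁆ = (Real.sqrt 3 / 6) • f 1)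
    (h43' : ⁅f 3, f 2⁆ = (Real.sqrt 3 / 3) • f 2) :
    LieAlgebra.IsSolvable L₁ ∧ LieAlgebra.IsSolvable L₂ ∧
      IsEmpty (L₁ ≃ₗ⁅ℝ⁆ L₂) := by
  refine ⟨?_, ?_, ?_⟩
  · -- L₁ solvable
    refine solvable_of_table' e (4 / 7) (4 / 7) h12 h13 h23 ?_ ?_ h43
    · rw [h41]
      exact Submodule.add_mem _
        (Submodule.smul_mem _ _ (Submodule.subset_span (by simp)))
        (Submodule.smul_mem _ _ (Submodule.subset_span (by simp)))
    · rw [h42]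
      exact Submodule.smul_mem _ _ (Submodule.subset_span (by simp))
  · -- L₂ solvable
    refine solvable_of_table' f (Real.sqrt 3 / 3) (Real.sqrt 3 / 3) h12' h13' h23' ?_ ?_ h43'
    · rw [h41']
      exact Submodule.smul_mem _ _ (Submodule.subset_span (by simp))
    · rw [h42']
      exact Submodule.smul_mem _ _ (Submodule.subset_span (by simp))
  · -- not isomorphic
    -- reversed bracket tables
    have g21 : ⁅f 1, f 0⁆ = -((Real.sqrt 3 / 3) • f 2) := by rw [← lie_skew, h12']
    have g31 : ⁅f 2, f 0⁆ = (0 : L₂) := by rw [← lie_skew, h13', neg_zero]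
    have g32 : ⁅f 2, f 1⁆ = (0 : L₂) := by rw [← lie_skew, h23', neg_zero]
    have g14 : ⁅f 0, f 3⁆ = -((Real.sqrt 3 / 6) • f 0) := by rw [← lie_skew, h41']
    have g24 : ⁅f 1, f 3⁆ = -((Real.sqrt 3 / 6) • f 1) := by rw [← lie_skew, h42']
    have g34 : ⁅f 2, f 3⁆ = -((Real.sqrt 3 / 3) • f 2) := by rw [← lie_skew, h43']
    have e21 : ⁅e 1, e 0⁆ = -((4 / 7 : ℝ) • e 2) := by rw [← lie_skew, h12]
    have e31 : ⁅e 2, e 0⁆ = (0 : L₁) := by rw [← lie_skew, h13, neg_zero]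
    have e32 : ⁅e 2, e 1⁆ = (0 : L₁) := by rw [← lie_skew, h23, neg_zero]
    have e14 : ⁅e 0, e 3⁆ = -((6 / 7 : ℝ) • e 0 + (8 / 7 : ℝ) • e 1) := by rw [← lie_skew, h41]
    have e24 : ⁅e 1, e 3⁆ = -((-(2 / 7) : ℝ) • e 1) := by rw [← lie_skew, h42]
    have e34 : ⁅e 2, e 3⁆ = -((4 / 7 : ℝ) • e 2) := by rw [← lie_skew, h43]
    -- trace formulas
    have trace_f : ∀ g : L₂ →ₗ[ℝ] L₂,
        LinearMap.trace ℝ L₂ g = ∑ k, f.repr (g (f k)) k := by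
      intro g
      rw [LinearMap.trace_eq_matrix_trace ℝ f, Matrix.trace]
      simp [LinearMap.toMatrix_apply, Matrix.diag]
    have trace_e : ∀ g : L₁ →ₗ[ℝ] L₁,
        LinearMap.trace ℝ L₁ g = ∑ k, e.repr (g (e k)) k := by
      intro g
      rw [LinearMap.trace_eq_matrix_trace ℝ e, Matrix.trace]
      simp [LinearMap.toMatrix_apply, Matrix.diag]
    -- Killing form and trace tables for L₂
    have hK : ∀ i j, killingForm ℝ L₂ (f i) (f j) =
        if i = 3 ∧ j = 3 then 1 / 2 else 0 := by
      intro i j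
      rw [killingForm_apply_apply, trace_f]
      fin_cases i <;> fin_cases j <;>
        simp [Fin.sum_univ_four, ad_apply, lie_smul, lie_self, h12', h13', h23', h41', h42',
          h43', g21, g31, g32, g14, g24, g34, Finsupp.single_apply, smul_smul] <;>
        (ring_nf; rw [Real.sq_sqrt (by norm_num : (3:ℝ) ≥ 0)]; ring)
    have hT : ∀ i, LinearMap.trace ℝ L₂ (ad ℝ L₂ (f i)) =
        if i = 3 then 2 * Real.sqrt 3 / 3 else 0 := by
      intro i
      rw [trace_f]
      fin_cases i <;>
        simp [Fin.sum_univ_four, ad_apply, h12', h13', h23', h41', h42', h43',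
          g21, g31, g32, g14, g24, g34, Finsupp.single_apply] <;>
        ring
    -- the quadratic identity in L₂
    set T : L₂ →ₗ[ℝ] ℝ :=
      (LinearMap.trace ℝ L₂).comp (ad ℝ L₂).toLinearMap with hTdef
    have hT' : ∀ i, T (f i) = if i = 3 then 2 * Real.sqrt 3 / 3 else 0 := hT
    have key : ∀ y : L₂, 8 * killingForm ℝ L₂ y y = 3 * (T y) ^ 2 := by
      intro y
      rw [← f.sum_repr y]
      simp [Fin.sum_univ_four, map_add, map_smul, LinearMap.add_apply,
        LinearMap.smul_apply, smul_eq_mul, hK, hT', -Module.Basis.sum_repr]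
      ring_nf
      rw [Real.sq_sqrt (by norm_num : (3:ℝ) ≥ 0)]
      ring
    -- values at e 3 in L₁
    have hK1 : killingForm ℝ L₁ (e 3) (e 3) = 8 / 7 := by
      rw [killingForm_apply_apply, trace_e]
      simp [Fin.sum_univ_four, ad_apply, lie_add, lie_smul, lie_self, h12, h13, h23, h41,
        h42, h43, e21, e31, e32, e14, e24, e34, Finsupp.single_apply, smul_smul]
      norm_num
    have hT1 : LinearMap.trace ℝ L₁ (ad ℝ L₁ (e 3)) = 8 / 7 := by
      rw [trace_e]
      simp [Fin.sum_univ_four, ad_apply, h12, h13, h23, h41, h42, h43,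
        e21, e31, e32, e14, e24, e34, Finsupp.single_apply]
      norm_num
    refine ⟨fun φ => ?_⟩
    have hKφ : killingForm ℝ L₂ (φ (e 3)) (φ (e 3)) = 8 / 7 := by
      rw [killingForm_of_equiv_apply]; exact hK1
    have hTφ : T (φ (e 3)) = 8 / 7 := by
      show LinearMap.trace ℝ L₂ (ad ℝ L₂ (φ (e 3))) = 8 / 7
      rw [← LieAlgebra.conj_ad_apply, LinearMap.trace_conj']
      exact hT1
    have := key (φ (e 3))
    rw [hKφ, hTφ] at this
    norm_num at this
end

section
/- Let c₁₂₃, c₁₃₄, c₂₃₅ be nonzero real numbers and let 𝔤 be the real Lie algebra with basis e_1,…,e_5 and nonzero brackets [e_1,e_2] = c₁₂₃ e_3, [e_1,e_3] = c₁₃₄ e_4, [e_2,e_3] = c₂₃₅ e_5. Then a linear map D: 𝔤 → 𝔤 with matrix entries d_{ij} (so D e_j = Σ_i d_{ij} e_i) is a derivation of 𝔤 if and only if: d_{11} = d_{33} − d_{22}, d_{44} = 2d_{33} − d_{22}, d_{55} = d_{22} + d_{33}, d_{43} = (c₁₃₄/c₁₂₃) d_{32}, d_{53} = −(c₂₃₅/c₁₂₃)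 d_{31}, d_{54} = (c₂₃₅/c₁₃₄) d_{21}, d_{45} = (c₁₃₄/c₂₃₅) d_{12}, and d_{13} = d_{14} = d_{15} = d_{23} = d_{24} = d_{25} = d_{34} = d_{35} = 0 (while d_{22}, d_{33}, d_{12}, d_{21}, d_{31}, d_{32}, d_{41}, d_{42}, d_{51}, d_{52} are arbitrary). -/
set_option maxHeartbeats 1000000


/-- Derivations of the nilpotent Lie algebra `(0,0, c₁₂₃ e¹², c₁₃₄ e¹³, c₂₃₅ e²³)`:
a linear map `D` with matrix `d` (so `D e_j = Σ_i d i j • e_i`) is a derivation if and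
only if the stated linear conditions on the entries of `d` hold. -/
theorem derivation_iff_matrix_conditions
    {L : Type*} [LieRing L] [LieAlgebra ℝ L]
    (c₁₂₃ c₁₃₄ c₂₃₅ : ℝ) (hc₁₂₃ : c₁₂₃ ≠ 0) (hc₁₃₄ : c₁₃₄ ≠ 0) (hc₂₃₅ : c₂₃₅ ≠ 0)
    (e : Module.Basis (Fin 5) ℝ L)
    (h12 : ⁅e 0, e 1⁆ = c₁₂₃ • e 2)
    (h13 : ⁅e 0, e 2⁆ = c₁₃₄ • e 3)
    (h23 : ⁅e 1, e 2⁆ = c₂₃₅ • e 4)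
    (h14 : ⁅e 0, e 3⁆ = 0) (h15 : ⁅e 0, e 4⁆ = 0)
    (h24 : ⁅e 1, e 3⁆ = 0) (h25 : ⁅e 1, e 4⁆ = 0)
    (h34 : ⁅e 2, e 3⁆ = 0) (h35 : ⁅e 2, e 4⁆ = 0)
    (h45 : ⁅e 3, e 4⁆ = 0)
    (D : Module.End ℝ L) (d : Matrix (Fin 5) (Fin 5) ℝ)
    (hd : ∀ j, D (e j) = ∑ i, d i j • e i) :
    (∀ x y : L, D ⁅x, y⁆ = ⁅D x, y⁆ + ⁅x, D y⁆) ↔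
      (d 0 0 = d 2 2 - d 1 1 ∧
       d 3 3 = 2 * d 2 2 - d 1 1 ∧
       d 4 4 = d 1 1 + d 2 2 ∧
       d 3 2 = c₁₃₄ / c₁₂₃ * d 2 1 ∧
       d 4 2 = -(c₂₃₅ / c₁₂₃) * d 2 0 ∧
       d 4 3 = c₂₃₅ / c₁₃₄ * d 1 0 ∧
       d 3 4 = c₁₃₄ / c₂₃₅ * d 0 1 ∧
       d 0 2 = 0 ∧ d 0 3 = 0 ∧ d 0 4 = 0 ∧
       d 1 2 = 0 ∧ d 1 3 = 0 ∧ d 1 4 = 0 ∧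
       d 2 3 = 0 ∧ d 2 4 = 0) := by
  have h21 : ⁅e 1, e 0⁆ = -(c₁₂₃ • e 2) := by rw [← lie_skew, h12]
  have h31 : ⁅e 2, e 0⁆ = -(c₁₃₄ • e 3) := by rw [← lie_skew, h13]
  have h32 : ⁅e 2, e 1⁆ = -(c₂₃₅ • e 4) := by rw [← lie_skew, h23]
  have h41 : ⁅e 3, e 0⁆ = 0 := by rw [← lie_skew, h14, neg_zero]
  have h51 : ⁅e 4, e 0⁆ = 0 := by rw [← lie_skew, h15, neg_zero]
  have h42 : ⁅e 3, e 1⁆ = 0 := by rw [← lie_skew, h24, neg_zero]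
  have h52 : ⁅e 4, e 1⁆ = 0 := by rw [← lie_skew, h25, neg_zero]
  have h43 : ⁅e 3, e 2⁆ = 0 := by rw [← lie_skew, h34, neg_zero]
  have h53 : ⁅e 4, e 2⁆ = 0 := by rw [← lie_skew, h35, neg_zero]
  have h54 : ⁅e 4, e 3⁆ = 0 := by rw [← lie_skew, h45, neg_zero]
  constructor
  · intro H
    have E01 := H (e 0) (e 1)
    have E02 := H (e 0) (e 2)
    have E12 := H (e 1) (e 2)
    have q010 := congrArg (fun z => e.repr z 0) E01
    have q011 := congrArg (fun z => e.repr z 1) E01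
    have q012 := congrArg (fun z => e.repr z 2) E01
    have q013 := congrArg (fun z => e.repr z 3) E01
    have q014 := congrArg (fun z => e.repr z 4) E01
    have q020 := congrArg (fun z => e.repr z 0) E02
    have q021 := congrArg (fun z => e.repr z 1) E02
    have q022 := congrArg (fun z => e.repr z 2) E02
    have q023 := congrArg (fun z => e.repr z 3) E02
    have q024 := congrArg (fun z => e.repr z 4) E02
    have q120 := congrArg (fun z => e.repr z 0) E12
    have q121 := congrArg (fun z => e.repr z 1) E12
    have q122 := congrArg (fun z => e.repr z 2) E12
    have q123 := congrArg (fun z => e.repr z 3) E12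
    have q124 := congrArg (fun z => e.repr z 4) E12
    simp [hd, Fin.sum_univ_five, h12, h13, h23, h14, h15, h24, h25, h34, h35, h45,
      h21, h31, h32, h41, h51, h42, h52, h43, h53, h54, Finsupp.single_apply, smul_smul,
      mul_comm] at q010 q011 q012 q013 q014 q020 q021 q022 q023 q024 q120 q121 q122 q123 q124
    have p02 : d 0 2 = 0 := q010.resolve_left hc₁₂₃
    have p12 : d 1 2 = 0 := q011.resolve_left hc₁₂₃
    have p03 : d 0 3 = 0 := q020.resolve_left hc₁₃₄
    have p13 : d 1 3 = 0 := q021.resolve_left hc₁₃₄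
    have p04 : d 0 4 = 0 := q120.resolve_left hc₂₃₅
    have p14 : d 1 4 = 0 := q121.resolve_left hc₂₃₅
    have g1 : d 0 0 = d 2 2 - d 1 1 := by
      apply mul_left_cancel₀ hc₁₂₃; linear_combination -q012
    have g2 : d 3 3 = 2 * d 2 2 - d 1 1 := by
      apply mul_left_cancel₀ hc₁₃₄; linear_combination q023 + c₁₃₄ * g1
    have g3 : d 4 4 = d 1 1 + d 2 2 := by
      apply mul_left_cancel₀ hc₂₃₅; linear_combination q124
    have g4 : d 3 2 = c₁₃₄ / c₁₂₃ * d 2 1 := by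
      field_simp; linear_combination q013
    have g5 : d 4 2 = -(c₂₃₅ / c₁₂₃) * d 2 0 := by
      field_simp; linear_combination q014
    have g6 : d 4 3 = c₂₃₅ / c₁₃₄ * d 1 0 := by
      field_simp; linear_combination q024
    have g7 : d 3 4 = c₁₃₄ / c₂₃₅ * d 0 1 := by
      field_simp; linear_combination q123
    have g23 : d 2 3 = 0 := by
      apply mul_left_cancel₀ hc₁₃₄; linear_combination q022 + c₁₂₃ * p12
    have g24 : d 2 4 = 0 := by
      apply mul_left_cancel₀ hc₂₃₅; linear_combination q122 - c₁₂₃ * p02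
    exact ⟨g1, g2, g3, g4, g5, g6, g7, p02, p03, p04, p12, p13, p14, g23, g24⟩
  · rintro ⟨g1, g2, g3, g4, g5, g6, g7, p02, p03, p04, p12, p13, p14, g23, g24⟩
    have hskew : ∀ x y : L, D ⁅x, y⁆ = ⁅D x, y⁆ + ⁅x, D y⁆ →
        D ⁅y, x⁆ = ⁅D y, x⁆ + ⁅y, D x⁆ := by
      intro x y h
      have e1 : ⁅y, x⁆ = -⁅x, y⁆ := by rw [← lie_skew]
      have e2 : ⁅D y, x⁆ = -⁅x, D y⁆ := by rw [← lie_skew]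
      have e3 : ⁅y, D x⁆ = -⁅D x, y⁆ := by rw [← lie_skew]
      rw [e1, e2, e3, map_neg, h]
      abel
    have hself : ∀ x : L, D ⁅x, x⁆ = ⁅D x, x⁆ + ⁅x, D x⁆ := by
      intro x
      have e4 : ⁅x, D x⁆ = -⁅D x, x⁆ := by rw [← lie_skew]
      rw [lie_self, map_zero, e4]
      abel
    have P01 : D ⁅e 0, e 1⁆ = ⁅D (e 0), e 1⁆ + ⁅e 0, D (e 1)⁆ := by
      refine e.repr.injective (Finsupp.ext fun k => ?_)
      fin_cases k <;>
        simp [hd, Fin.sum_univ_five, h12, h13, h23, h14, h15, h24, h25, h34, h35, h45,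
          h21, h31, h32, h41, h51, h42, h52, h43, h53, h54, Finsupp.single_apply, smul_smul,
          g1, g2, g3, g4, g5, g6, g7, p02, p03, p04, p12, p13, p14, g23, g24] <;>
        (try field_simp) <;> (try ring)
    have P02 : D ⁅e 0, e 2⁆ = ⁅D (e 0), e 2⁆ + ⁅e 0, D (e 2)⁆ := by
      refine e.repr.injective (Finsupp.ext fun k => ?_)
      fin_cases k <;>
        simp [hd, Fin.sum_univ_five, h12, h13, h23, h14, h15, h24, h25, h34, h35, h45,
          h21, h31, h32, h41, h51, h42, h52, h43, h53, h54, Finsupp.single_apply, smul_smul,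
          g1, g2, g3, g4, g5, g6, g7, p02, p03, p04, p12, p13, p14, g23, g24] <;>
        (try field_simp) <;> (try ring)
    have P12 : D ⁅e 1, e 2⁆ = ⁅D (e 1), e 2⁆ + ⁅e 1, D (e 2)⁆ := by
      refine e.repr.injective (Finsupp.ext fun k => ?_)
      fin_cases k <;>
        simp [hd, Fin.sum_univ_five, h12, h13, h23, h14, h15, h24, h25, h34, h35, h45,
          h21, h31, h32, h41, h51, h42, h52, h43, h53, h54, Finsupp.single_apply, smul_smul,
          g1, g2, g3, g4, g5, g6, g7, p02, p03, p04, p12, p13, p14, g23, g24] <;>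
        (try field_simp) <;> (try ring)
    have P03 : D ⁅e 0, e 3⁆ = ⁅D (e 0), e 3⁆ + ⁅e 0, D (e 3)⁆ := by
      refine e.repr.injective (Finsupp.ext fun k => ?_)
      fin_cases k <;>
        simp [hd, Fin.sum_univ_five, h12, h13, h23, h14, h15, h24, h25, h34, h35, h45,
          h21, h31, h32, h41, h51, h42, h52, h43, h53, h54, Finsupp.single_apply, smul_smul,
          g1, g2, g3, g4, g5, g6, g7, p02, p03, p04, p12, p13, p14, g23, g24] <;>
        (try field_simp) <;> (try ring)
    have P04 : D ⁅e 0, e 4⁆ = ⁅D (e 0), e 4⁆ + ⁅e 0, D (e 4)⁆ := by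
      refine e.repr.injective (Finsupp.ext fun k => ?_)
      fin_cases k <;>
        simp [hd, Fin.sum_univ_five, h12, h13, h23, h14, h15, h24, h25, h34, h35, h45,
          h21, h31, h32, h41, h51, h42, h52, h43, h53, h54, Finsupp.single_apply, smul_smul,
          g1, g2, g3, g4, g5, g6, g7, p02, p03, p04, p12, p13, p14, g23, g24] <;>
        (try field_simp) <;> (try ring)
    have P13 : D ⁅e 1, e 3⁆ = ⁅D (e 1), e 3⁆ + ⁅e 1, D (e 3)⁆ := by
      refine e.repr.injective (Finsupp.ext fun k => ?_)
      fin_cases k <;>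
        simp [hd, Fin.sum_univ_five, h12, h13, h23, h14, h15, h24, h25, h34, h35, h45,
          h21, h31, h32, h41, h51, h42, h52, h43, h53, h54, Finsupp.single_apply, smul_smul,
          g1, g2, g3, g4, g5, g6, g7, p02, p03, p04, p12, p13, p14, g23, g24] <;>
        (try field_simp) <;> (try ring)
    have P14 : D ⁅e 1, e 4⁆ = ⁅D (e 1), e 4⁆ + ⁅e 1, D (e 4)⁆ := by
      refine e.repr.injective (Finsupp.ext fun k => ?_)
      fin_cases k <;>
        simp [hd, Fin.sum_univ_five, h12, h13, h23, h14, h15, h24, h25, h34, h35, h45,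
          h21, h31, h32, h41, h51, h42, h52, h43, h53, h54, Finsupp.single_apply, smul_smul,
          g1, g2, g3, g4, g5, g6, g7, p02, p03, p04, p12, p13, p14, g23, g24] <;>
        (try field_simp) <;> (try ring)
    have P23 : D ⁅e 2, e 3⁆ = ⁅D (e 2), e 3⁆ + ⁅e 2, D (e 3)⁆ := by
      refine e.repr.injective (Finsupp.ext fun k => ?_)
      fin_cases k <;>
        simp [hd, Fin.sum_univ_five, h12, h13, h23, h14, h15, h24, h25, h34, h35, h45,
          h21, h31, h32, h41, h51, h42, h52, h43, h53, h54, Finsupp.single_apply, smul_smul,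
          g1, g2, g3, g4, g5, g6, g7, p02, p03, p04, p12, p13, p14, g23, g24] <;>
        (try field_simp) <;> (try ring)
    have P24 : D ⁅e 2, e 4⁆ = ⁅D (e 2), e 4⁆ + ⁅e 2, D (e 4)⁆ := by
      refine e.repr.injective (Finsupp.ext fun k => ?_)
      fin_cases k <;>
        simp [hd, Fin.sum_univ_five, h12, h13, h23, h14, h15, h24, h25, h34, h35, h45,
          h21, h31, h32, h41, h51, h42, h52, h43, h53, h54, Finsupp.single_apply, smul_smul,
          g1, g2, g3, g4, g5, g6, g7, p02, p03, p04, p12, p13, p14, g23, g24] <;>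
        (try field_simp) <;> (try ring)
    have P34 : D ⁅e 3, e 4⁆ = ⁅D (e 3), e 4⁆ + ⁅e 3, D (e 4)⁆ := by
      refine e.repr.injective (Finsupp.ext fun k => ?_)
      fin_cases k <;>
        simp [hd, Fin.sum_univ_five, h12, h13, h23, h14, h15, h24, h25, h34, h35, h45,
          h21, h31, h32, h41, h51, h42, h52, h43, h53, h54, Finsupp.single_apply, smul_smul,
          g1, g2, g3, g4, g5, g6, g7, p02, p03, p04, p12, p13, p14, g23, g24] <;>
        (try field_simp) <;> (try ring)
    have key : ∀ i j, D ⁅e i, e j⁆ = ⁅D (e i), e j⁆ + ⁅e i, D (e j)⁆ := by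
      intro i j
      fin_cases i <;> fin_cases j
      exacts [hself _, P01, P02, P03, P04,
        hskew _ _ P01, hself _, P12, P13, P14,
        hskew _ _ P02, hskew _ _ P12, hself _, P23, P24,
        hskew _ _ P03, hskew _ _ P13, hskew _ _ P23, hself _, P34,
        hskew _ _ P04, hskew _ _ P14, hskew _ _ P24, hskew _ _ P34, hself _]
    intro x y
    rw [← e.sum_repr x, ← e.sum_repr y]
    simp only [Fin.sum_univ_five, add_lie, lie_add, smul_lie, lie_smul, map_add, map_smul,
      key, smul_add]
    abel
end
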